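/- Under Assumption 2 with γ := C/(1−ρ) > 1, let V̄ > 0, ρ_γ := (γ−1)/γ, γ̲ := min{γ, V̄/ε}, and N₀ := ⌈max{0, (V̄ − γε)/ε}⌉. Let x₀ ∈ ℝⁿ with V_{∞,0}(x₀) ≤ V̄ and let x_∞(·), u_∞(·) be an infinite-horizon optimal trajectory from x₀, i.e. an admissible pair with V_{∞,0}(x₀) = Σ_{k=0}^{∞} ℓ(x_∞(k), u_∞(k)). Then for every N ≥ N₀, the infinite-horizon tail cost satisfies V_{∞,0}(x_∞(N)) ≤ ρ_γ^{N−N₀} · min{γ̲ · ε, V_{∞,0}(x₀)}. -/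

import Mathlib

open Finset Filter
open scoped ENNReal

noncomputable section

open scoped Classical

/-- State/input spaces are Euclidean spaces. -/
abbrev Vec (n : ℕ) := EuclideanSpace ℝ (Fin n)

/-- Open-loop state trajectory: `x(0) = x`, `x(k+1) = f(x(k), u(k))`. -/
def traj {n m : ℕ} (f : Vec n → Vec m → Vec n) (x : Vec n) (u : ℕ → Vec m) : ℕ → Vec n
  | 0 => x
  | k + 1 => f (traj f x u k) (u k)

/-- Closed-loop state trajectory under the feedback `κ` (the map `φ_x(·, x)`). -/
def phiX {n m : ℕ} (f : Vec n → Vec m → Vec n) (κ : Vec n → Vec m) (x : Vec n) : ℕ → Vec n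
  | 0 => x
  | k + 1 => f (phiX f κ x k) (κ (phiX f κ x k))

/-- `ℓ_min(x) := inf_{u ∈ U} ℓ(x, u)`. -/
def lmin {n m : ℕ} (ℓ : Vec n → Vec m → ℝ) (Uset : Set (Vec m)) (x : Vec n) : ℝ :=
  sInf ((fun u => ℓ x u) '' Uset)

/-- Finite-tail cost `V_{f,M}(x)`: sum of the stage cost along the κ-closed loop if the
constraints are satisfied along the tail, and `+∞` otherwise (for `M = 0` it equals `0`). -/
def Vtail {n m : ℕ} (f : Vec n → Vec m → Vec n) (κ : Vec n → Vec m)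
    (ℓ : Vec n → Vec m → ℝ) (Z : Set (Vec n × Vec m)) (M : ℕ) (x : Vec n) : ℝ≥0∞ :=
  if ∀ k < M, (phiX f κ x k, κ (phiX f κ x k)) ∈ Z then
    ENNReal.ofReal (∑ k ∈ Finset.range M, ℓ (phiX f κ x k) (κ (phiX f κ x k)))
  else ⊤

/-- Feasibility of the input sequence `u` over horizon `N` from state `x`. -/
def Feasible {n m : ℕ} (f : Vec n → Vec m → Vec n) (Z : Set (Vec n × Vec m))
    (Uset : Set (Vec m)) (N : ℕ) (x : Vec n) (u : ℕ → Vec m) : Prop :=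
  ∀ k < N, u k ∈ Uset ∧ (traj f x u k, u k) ∈ Z

/-- MPC open-loop cost `J_{N,M}` of the input sequence `u` from state `x`. -/
def Jcost {n m : ℕ} (f : Vec n → Vec m → Vec n) (κ : Vec n → Vec m)
    (ℓ : Vec n → Vec m → ℝ) (Z : Set (Vec n × Vec m)) (N M : ℕ) (x : Vec n)
    (u : ℕ → Vec m) : ℝ≥0∞ :=
  ENNReal.ofReal (∑ k ∈ Finset.range N, ℓ (traj f x u k) (u k)) +
    Vtail f κ ℓ Z M (traj f x u N)

/-- MPC value function `V_{N,M}(x)` (equal to `+∞` if the problem is infeasible). -/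
def Vmpc {n m : ℕ} (f : Vec n → Vec m → Vec n) (κ : Vec n → Vec m)
    (ℓ : Vec n → Vec m → ℝ) (Z : Set (Vec n × Vec m)) (Uset : Set (Vec m))
    (N M : ℕ) (x : Vec n) : ℝ≥0∞ :=
  ⨅ (u : ℕ → Vec m) (_ : Feasible f Z Uset N x u), Jcost f κ ℓ Z N M x u

/-- `u` is a minimizing (optimal) input sequence for `V_{N,M}(x)`. -/
def IsMinimizer {n m : ℕ} (f : Vec n → Vec m → Vec n) (κ : Vec n → Vec m)
    (ℓ : Vec n → Vec m → ℝ) (Z : Set (Vec n × Vec m)) (Uset : Set (Vec m))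
    (N M : ℕ) (x : Vec n) (u : ℕ → Vec m) : Prop :=
  Feasible f Z Uset N x u ∧ Vmpc f κ ℓ Z Uset N M x = Jcost f κ ℓ Z N M x u

/-- Infinite-horizon optimal cost `V_{∞,0}(x)`. -/
def Vinf {n m : ℕ} (f : Vec n → Vec m → Vec n) (ℓ : Vec n → Vec m → ℝ)
    (Z : Set (Vec n × Vec m)) (Uset : Set (Vec m)) (x : Vec n) : ℝ≥0∞ :=
  ⨅ (u : ℕ → Vec m) (_ : ∀ k, u k ∈ Uset ∧ (traj f x u k, u k) ∈ Z),
    ∑' k : ℕ, ENNReal.ofReal (ℓ (traj f x u k) (u k))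

/-- Assumption 2 (locally stabilizing controller): exponential decay of the stage
cost along the κ-closed loop and constraint satisfaction, locally (`ℓ_min(x) ≤ ε`). -/
def Assumption2 {n m : ℕ} (f : Vec n → Vec m → Vec n) (κ : Vec n → Vec m)
    (ℓ : Vec n → Vec m → ℝ) (Z : Set (Vec n × Vec m)) (Uset : Set (Vec m))
    (ρ C ε : ℝ) : Prop :=
  ρ ∈ Set.Ico (0 : ℝ) 1 ∧ 1 ≤ C ∧ 0 < ε ∧
    ∀ x : Vec n, lmin ℓ Uset x ≤ ε → ∀ k : ℕ,
      ℓ (phiX f κ x k) (κ (phiX f κ x k)) ≤ C * ρ ^ k * lmin ℓ Uset x ∧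
      (phiX f κ x k, κ (phiX f κ x k)) ∈ Z

/-- A class-`K∞` function: continuous, strictly increasing and unbounded on `[0,∞)`
with `α(0) = 0`. -/
def IsKInfty (α : ℝ → ℝ) : Prop :=
  ContinuousOn α (Set.Ici 0) ∧ StrictMonoOn α (Set.Ici 0) ∧ α 0 = 0 ∧
    Tendsto α atTop atTop

lemma enn_split (g : ℕ → ℝ≥0∞) (k : ℕ) :
    ∑' i, g i = (∑ i ∈ Finset.range k, g i) + ∑' i, g (i + k) := by
  induction k with
  | zero => simp
  | succ k ih =>
    rw [ih, Finset.sum_range_succ, tsum_eq_zero_add' ENNReal.summable]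
    have : ∀ i : ℕ, i + 1 + k = i + (k + 1) := by omega
    simp only [zero_add, this]
    ring

lemma traj_shift {n m : ℕ} (f : Vec n → Vec m → Vec n) (x : Vec n) (u : ℕ → Vec m) (k : ℕ) :
    ∀ j, traj f (traj f x u k) (fun i => u (i + k)) j = traj f x u (j + k) := by
  intro j; induction j with
  | zero => simp [traj]
  | succ j ih =>
    have h : j + 1 + k = (j + k) + 1 := by omega
    rw [h]
    show f _ _ = f _ _
    rw [ih]

lemma traj_splice_le {n m : ℕ} (f : Vec n → Vec m → Vec n) (x : Vec n) (u1 u2 : ℕ → Vec m)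
    (k : ℕ) : ∀ j, j ≤ k →
      traj f x (fun i => if i < k then u1 i else u2 (i - k)) j = traj f x u1 j := by
  intro j; induction j with
  | zero => intro _; rfl
  | succ j ih =>
    intro hj
    show f _ _ = f _ _
    rw [ih (by omega)]
    have hjk : j < k := by omega
    simp [hjk]

lemma traj_splice_ge {n m : ℕ} (f : Vec n → Vec m → Vec n) (x : Vec n) (u1 u2 : ℕ → Vec m)
    (k : ℕ) : ∀ j,
      traj f x (fun i => if i < k then u1 i else u2 (i - k)) (j + k) =
        traj f (traj f x u1 k) u2 j := by
  intro j; induction j with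
  | zero => simpa [traj] using traj_splice_le f x u1 u2 k k le_rfl
  | succ j ih =>
    have h : j + 1 + k = (j + k) + 1 := by omega
    rw [h]
    show f _ _ = f _ _
    rw [ih]
    have hjk : ¬ (j + k < k) := by omega
    simp [hjk]
-- lemmas to test, appended to defs
section
variable {n m : ℕ} (f : Vec n → Vec m → Vec n) (κ : Vec n → Vec m) (ℓ : Vec n → Vec m → ℝ)
  (Z : Set (Vec n × Vec m)) (Uset : Set (Vec m))

lemma lmin_nonneg (hℓ0 : ∀ x u, 0 ≤ ℓ x u) (x : Vec n) : 0 ≤ lmin ℓ Uset x :=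
  Real.sInf_nonneg (by rintro y ⟨u, _, rfl⟩; exact hℓ0 x u)

lemma lmin_le (hℓ0 : ∀ x u, 0 ≤ ℓ x u) (x : Vec n) {u : Vec m} (hu : u ∈ Uset) :
    lmin ℓ Uset x ≤ ℓ x u :=
  csInf_le ⟨0, by rintro y ⟨v, _, rfl⟩; exact hℓ0 x v⟩ ⟨u, hu, rfl⟩

lemma phiX_traj (x : Vec n) : ∀ k, traj f x (fun j => κ (phiX f κ x j)) k = phiX f κ x k := by
  intro k; induction k with
  | zero => rfl
  | succ k ih => show f _ _ = f _ _; rw [ih]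

/-- Under Assumption 2, `Vinf x ≤ γ ℓmin(x)` locally. -/
lemma Vinf_le_gamma (hℓ0 : ∀ x u, 0 ≤ ℓ x u) (hκU : ∀ x, κ x ∈ Uset)
    {ρ C ε : ℝ} (hA2 : Assumption2 f κ ℓ Z Uset ρ C ε) {γ : ℝ} (hγ : γ = C / (1 - ρ))
    (x : Vec n) (hx : lmin ℓ Uset x ≤ ε) :
    Vinf f ℓ Z Uset x ≤ ENNReal.ofReal (γ * lmin ℓ Uset x) := by
  obtain ⟨hρ, hC, hε, hdec⟩ := hA2
  set u : ℕ → Vec m := fun j => κ (phiX f κ x j) with hu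
  have htr : ∀ k, traj f x u k = phiX f κ x k := phiX_traj f κ x
  have hadm : ∀ k, u k ∈ Uset ∧ (traj f x u k, u k) ∈ Z := by
    intro k
    refine ⟨hκU _, ?_⟩
    rw [htr k]
    exact (hdec x hx k).2
  refine le_trans (iInf₂_le u hadm) ?_
  have hL : 0 ≤ lmin ℓ Uset x := lmin_nonneg ℓ Uset hℓ0 x
  have hρ1 : (0:ℝ) < 1 - ρ := by linarith [hρ.2]
  calc ∑' k : ℕ, ENNReal.ofReal (ℓ (traj f x u k) (u k))
      ≤ ∑' k : ℕ, ENNReal.ofReal ((C * lmin ℓ Uset x) * ρ ^ k) := by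
        refine ENNReal.tsum_le_tsum fun k => ENNReal.ofReal_le_ofReal ?_
        rw [htr k]
        calc ℓ (phiX f κ x k) (κ (phiX f κ x k)) ≤ C * ρ ^ k * lmin ℓ Uset x :=
              (hdec x hx k).1
          _ = (C * lmin ℓ Uset x) * ρ ^ k := by ring
    _ = ENNReal.ofReal (C * lmin ℓ Uset x) * ∑' k : ℕ, (ENNReal.ofReal ρ) ^ k := by
        rw [← ENNReal.tsum_mul_left]
        congr 1; funext k
        rw [ENNReal.ofReal_mul (by positivity), ENNReal.ofReal_pow hρ.1]
    _ = ENNReal.ofReal (C * lmin ℓ Uset x) * ENNReal.ofReal ((1 - ρ)⁻¹) := by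
        rw [ENNReal.tsum_geometric, ← ENNReal.ofReal_one, ← ENNReal.ofReal_sub _ hρ.1,
          ENNReal.ofReal_inv_of_pos hρ1]
    _ = ENNReal.ofReal (γ * lmin ℓ Uset x) := by
        rw [← ENNReal.ofReal_mul (by positivity)]
        congr 1
        rw [hγ]; ring

end
section
variable {n m : ℕ} (f : Vec n → Vec m → Vec n) (κ : Vec n → Vec m) (ℓ : Vec n → Vec m → ℝ)
  (Z : Set (Vec n × Vec m)) (Uset : Set (Vec m))

lemma tail_eq_Vinf (x₀ : Vec n) (uinf : ℕ → Vec m)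
    (hadm : ∀ k, uinf k ∈ Uset ∧ (traj f x₀ uinf k, uinf k) ∈ Z)
    (hoptimal : Vinf f ℓ Z Uset x₀ =
      ∑' k : ℕ, ENNReal.ofReal (ℓ (traj f x₀ uinf k) (uinf k))) (k : ℕ) :
    Vinf f ℓ Z Uset (traj f x₀ uinf k) =
      ∑' j : ℕ, ENNReal.ofReal (ℓ (traj f x₀ uinf (j + k)) (uinf (j + k))) := by
  set xk := traj f x₀ uinf k with hxk
  apply le_antisymm
  · -- shift
    set us : ℕ → Vec m := fun i => uinf (i + k) with hus
    have htr : ∀ j, traj f xk us j = traj f x₀ uinf (j + k) := traj_shift f x₀ uinf k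
    have hadm' : ∀ j, us j ∈ Uset ∧ (traj f xk us j, us j) ∈ Z := by
      intro j
      rw [htr j]
      exact hadm (j + k)
    refine le_trans (iInf₂_le us hadm') (le_of_eq ?_)
    congr 1; funext j; rw [htr j]
  · -- splice
    refine le_iInf₂ fun ut hut => ?_
    set u' : ℕ → Vec m := fun i => if i < k then uinf i else ut (i - k) with hu'
    have hle : ∀ j, j ≤ k → traj f x₀ u' j = traj f x₀ uinf j :=
      traj_splice_le f x₀ uinf ut k
    have hge : ∀ j, traj f x₀ u' (j + k) = traj f xk ut j := traj_splice_ge f x₀ uinf ut k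
    have hadm' : ∀ j, u' j ∈ Uset ∧ (traj f x₀ u' j, u' j) ∈ Z := by
      intro j
      rcases lt_or_ge j k with h | h
      · have hj : u' j = uinf j := by simp [hu', h]
        rw [hj, hle j h.le]
        exact hadm j
      · obtain ⟨i, rfl⟩ : ∃ i, j = i + k := ⟨j - k, by omega⟩
        have hj : u' (i + k) = ut i := by simp [hu', show ¬ (i + k < k) by omega]
        rw [hj, hge i]
        exact hut i
    have h1 : Vinf f ℓ Z Uset x₀ ≤ ∑' j : ℕ, ENNReal.ofReal (ℓ (traj f x₀ u' j) (u' j)) :=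
      iInf₂_le u' hadm'
    rw [hoptimal, enn_split _ k] at h1
    rw [enn_split (fun j => ENNReal.ofReal (ℓ (traj f x₀ u' j) (u' j))) k] at h1
    have hsame : ∀ j ∈ Finset.range k,
        ENNReal.ofReal (ℓ (traj f x₀ u' j) (u' j)) =
          ENNReal.ofReal (ℓ (traj f x₀ uinf j) (uinf j)) := by
      intro j hj
      rw [Finset.mem_range] at hj
      have hj' : u' j = uinf j := by simp [hu', hj]
      rw [hj', hle j hj.le]
    rw [Finset.sum_congr rfl hsame] at h1
    have hfin : (∑ j ∈ Finset.range k,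
        ENNReal.ofReal (ℓ (traj f x₀ uinf j) (uinf j))) ≠ ⊤ := by
      refine ne_of_lt ?_
      exact ENNReal.sum_lt_top.mpr fun i _ => ENNReal.ofReal_lt_top
    have h2 := (ENNReal.add_le_add_iff_left hfin).mp h1
    refine le_trans h2 (le_of_eq ?_)
    congr 1; funext j
    have hj : u' (j + k) = ut j := by simp [hu', show ¬ (j + k < k) by omega]
    rw [hge j, hj]

end
/-- Pure real-analysis decay lemma. -/
lemma real_tail_decay (γ ε Vbar ργ : ℝ) (r L : ℕ → ℝ) (N₀ : ℕ)
    (hγ1 : 1 < γ) (hε : 0 < ε) (hVbar : 0 < Vbar) (hργ : ργ = (γ - 1) / γ)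
    (hr0 : ∀ k, 0 ≤ r k) (hL0 : ∀ k, 0 ≤ L k)
    (hrec : ∀ k, r (k + 1) = r k - L k)
    (hloc : ∀ k, L k ≤ ε → r k ≤ γ * L k)
    (hrV : r 0 ≤ Vbar) (hN₀ : (Vbar - γ * ε) / ε ≤ (N₀ : ℝ)) :
    ∀ N, N₀ ≤ N → r N ≤ ργ ^ (N - N₀) * min (min (γ * ε) Vbar) (r 0) := by
  have hγ0 : (0:ℝ) < γ := by linarith
  have hmono : ∀ k, r (k + 1) ≤ r k := fun k => by
    have := hrec k; have := hL0 k; linarith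
  have hanti : ∀ j k, j ≤ k → r k ≤ r j := by
    intro j k hjk
    induction k with
    | zero => simp [Nat.le_zero.mp hjk]
    | succ k ih =>
      rcases Nat.lt_or_ge j (k+1) with h | h
      · exact le_trans (hmono k) (ih (by omega))
      · have : j = k + 1 := by omega
        subst this; rfl
  -- phase 1 bound
  have step1 : ∀ k, r k ≤ max (γ * ε) (r 0 - k * ε) := by
    intro k
    induction k with
    | zero => simp
    | succ k ih =>
      rcases le_or_gt (r k) (γ * ε) with h | h
      · exact le_trans (hmono k) (le_max_of_le_left h)
      · have hLε : ε ≤ L k := by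
          by_contra hc
          push_neg at hc
          have := hloc k hc.le
          nlinarith
        have : r (k + 1) ≤ r k - ε := by rw [hrec k]; linarith
        have h2 : r k - ε ≤ max (γ * ε) (r 0 - (k+1) * ε) := by
          rcases le_total (γ * ε) (r 0 - k * ε) with hm | hm
          · rw [max_eq_right hm] at ih
            refine le_max_of_le_right ?_
            push_cast; linarith
          · rw [max_eq_left hm] at ih
            exact le_max_of_le_left (by linarith)
        have hcast : ((k+1:ℕ):ℝ) = (k:ℝ)+1 := by push_cast; ring
        rw [hcast]
        exact le_trans this h2

  have hN₀γε : r N₀ ≤ γ * ε := by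
    refine le_trans (step1 N₀) (max_le le_rfl ?_)
    have : Vbar - γ * ε ≤ (N₀:ℝ) * ε := by
      rw [div_le_iff₀ hε] at hN₀; linarith
    linarith
  have hργ0 : 0 ≤ ργ := by rw [hργ]; exact div_nonneg (by linarith) hγ0.le
  have hργ1 : ργ < 1 := by
    rw [hργ, div_lt_one hγ0]; linarith
  set M := min (min (γ * ε) Vbar) (r 0) with hM
  have hM0 : 0 ≤ M := le_min (le_min (by positivity) hVbar.le) (hr0 0)
  have hMγε : M ≤ γ * ε := le_trans (min_le_left _ _) (min_le_left _ _)
  have hN₀M : r N₀ ≤ M := by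
    refine le_min (le_min hN₀γε ?_) (hanti 0 N₀ (Nat.zero_le _))
    exact le_trans (hanti 0 N₀ (Nat.zero_le _)) hrV
  -- decay step
  have hd : ∀ k, r k ≤ γ * ε → r (k + 1) ≤ ργ * r k := by
    intro k hk
    rcases le_or_gt (r k / γ) (L k) with h | h
    · rw [hrec k, hργ]
      rw [div_le_iff₀ hγ0] at h
      rw [div_mul_eq_mul_div, le_div_iff₀ hγ0]
      nlinarith
    · exfalso
      have hLε : L k ≤ ε := by
        have : r k / γ ≤ ε := by rw [div_le_iff₀ hγ0]; linarith [mul_comm γ ε]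
        linarith
      have h1 := hloc k hLε
      have h2 : γ * L k < r k := by
        rw [lt_div_iff₀ hγ0] at h
        linarith [mul_comm (L k) γ]
      linarith
  -- final induction
  have key : ∀ j, r (N₀ + j) ≤ ργ ^ j * M := by
    intro j
    induction j with
    | zero => simpa using hN₀M
    | succ j ih =>
      have hle : r (N₀ + j) ≤ γ * ε := by
        refine le_trans ih (le_trans ?_ hMγε)
        exact mul_le_of_le_one_left hM0 (pow_le_one₀ hργ0 hργ1.le)
      have h3 : r (N₀ + j + 1) ≤ ργ * r (N₀ + j) := hd _ hle
      calc r (N₀ + (j + 1)) = r (N₀ + j + 1) := by ring_nf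
        _ ≤ ργ * r (N₀ + j) := h3
        _ ≤ ργ * (ργ ^ j * M) := by
            exact mul_le_mul_of_nonneg_left ih hργ0
        _ = ργ ^ (j + 1) * M := by ring
  intro N hN
  have : N = N₀ + (N - N₀) := by omega
  rw [this]
  have h4 : N₀ + (N - N₀) - N₀ = N - N₀ := by omega
  rw [h4]
  exact key (N - N₀)
/-- Theorem 1, Part III, tail bound along the infinite-horizon optimal
trajectory: under Assumption 2 with `γ = C/(1-ρ) > 1`, `ρ_γ = (γ-1)/γ`,
`γ̲ = min {γ, V̄/ε}` and `N₀ = ⌈max {0, (V̄-γε)/ε}⌉`, if `x_∞(·), u_∞(·)` is an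
admissible infinite-horizon optimal pair from `x₀` with `V_{∞,0}(x₀) ≤ V̄`, then for
every `N ≥ N₀`, `V_{∞,0}(x_∞(N)) ≤ ρ_γ^(N-N₀) min {γ̲ ε, V_{∞,0}(x₀)}`. -/
theorem infinite_horizon_tail_bound {n m : ℕ}
    (f : Vec n → Vec m → Vec n) (κ : Vec n → Vec m) (ℓ : Vec n → Vec m → ℝ)
    (Z : Set (Vec n × Vec m)) (Uset : Set (Vec m)) (ρ C ε : ℝ)
    (hf : Continuous fun p : Vec n × Vec m => f p.1 p.2)
    (hℓ : Continuous fun p : Vec n × Vec m => ℓ p.1 p.2) (hℓ0 : ∀ x u, 0 ≤ ℓ x u)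
    (hU : IsCompact Uset) (hκ : Continuous κ) (hκU : ∀ x, κ x ∈ Uset)
    (hA2 : Assumption2 f κ ℓ Z Uset ρ C ε)
    (Vbar γ ργ γlow : ℝ) (hVbar : 0 < Vbar) (hγ : γ = C / (1 - ρ)) (hγ1 : 1 < γ)
    (hργ : ργ = (γ - 1) / γ) (hγlow : γlow = min γ (Vbar / ε))
    (N₀ : ℕ) (hN₀ : N₀ = ⌈max 0 ((Vbar - γ * ε) / ε)⌉₊)
    (x₀ : Vec n) (hx₀ : Vinf f ℓ Z Uset x₀ ≤ ENNReal.ofReal Vbar)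
    (uinf : ℕ → Vec m)
    (hadm : ∀ k, uinf k ∈ Uset ∧ (traj f x₀ uinf k, uinf k) ∈ Z)
    (hoptimal : Vinf f ℓ Z Uset x₀ =
      ∑' k : ℕ, ENNReal.ofReal (ℓ (traj f x₀ uinf k) (uinf k))) :
    ∀ N : ℕ, N₀ ≤ N →
      Vinf f ℓ Z Uset (traj f x₀ uinf N) ≤
        ENNReal.ofReal (ργ ^ (N - N₀)) *
          min (ENNReal.ofReal (γlow * ε)) (Vinf f ℓ Z Uset x₀) := by
  obtain ⟨hρIco, hC, hε, hdec⟩ := hA2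
  have hγ0 : (0:ℝ) < γ := by linarith
  -- stage costs along the optimal trajectory
  set L : ℕ → ℝ := fun j => ℓ (traj f x₀ uinf j) (uinf j) with hLdef
  have hL0 : ∀ j, 0 ≤ L j := fun j => hℓ0 _ _
  -- tail sums
  set T : ℕ → ℝ≥0∞ := fun k => ∑' j : ℕ, ENNReal.ofReal (L (j + k)) with hTdef
  have hTeq : ∀ k, Vinf f ℓ Z Uset (traj f x₀ uinf k) = T k := fun k =>
    tail_eq_Vinf f ℓ Z Uset x₀ uinf hadm hoptimal k
  have hT0 : Vinf f ℓ Z Uset x₀ = T 0 := by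
    have := hTeq 0
    exact this
  have hT0ne : T 0 ≠ ⊤ := by
    rw [← hT0]
    exact ne_top_of_le_ne_top ENNReal.ofReal_ne_top hx₀
  have hsplit : ∀ k, T 0 = (∑ j ∈ Finset.range k, ENNReal.ofReal (L j)) + T k := by
    intro k
    have := enn_split (fun j => ENNReal.ofReal (L j)) k
    simpa [hTdef] using this
  have hTne : ∀ k, T k ≠ ⊤ := by
    intro k
    intro hc
    apply hT0ne
    rw [hsplit k, hc]; simp
  -- real tail values
  set r : ℕ → ℝ := fun k => (T k).toReal with hrdef
  have hr0 : ∀ k, 0 ≤ r k := fun k => ENNReal.toReal_nonneg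
  have hTofReal : ∀ k, T k = ENNReal.ofReal (r k) := fun k =>
    (ENNReal.ofReal_toReal (hTne k)).symm
  -- recursion r (k+1) = r k - L k
  have hTrec : ∀ k, T k = ENNReal.ofReal (L k) + T (k + 1) := by
    intro k
    have h := enn_split (fun j => ENNReal.ofReal (L (j + k))) 1
    have hidx : ∀ i : ℕ, i + 1 + k = i + (k + 1) := by omega
    simp only [Finset.sum_range_one, zero_add, hidx] at h
    simpa [hTdef] using h
  have hrec : ∀ k, r (k + 1) = r k - L k := by
    intro k
    have h := hTrec k
    have h2 : r k = L k + r (k + 1) := by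
      rw [hrdef]
      simp only
      rw [h, ENNReal.toReal_add ENNReal.ofReal_ne_top (hTne (k+1)),
        ENNReal.toReal_ofReal (hL0 k)]
    linarith
  -- local bound
  have hloc : ∀ k, L k ≤ ε → r k ≤ γ * L k := by
    intro k hk
    have hlm : lmin ℓ Uset (traj f x₀ uinf k) ≤ L k :=
      lmin_le ℓ Uset hℓ0 _ (hadm k).1
    have hlmε : lmin ℓ Uset (traj f x₀ uinf k) ≤ ε := le_trans hlm hk
    have h1 : Vinf f ℓ Z Uset (traj f x₀ uinf k) ≤
        ENNReal.ofReal (γ * lmin ℓ Uset (traj f x₀ uinf k)) :=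
      Vinf_le_gamma f κ ℓ Z Uset hℓ0 hκU ⟨hρIco, hC, hε, hdec⟩ hγ _ hlmε
    have h2 : T k ≤ ENNReal.ofReal (γ * L k) := by
      rw [← hTeq k]
      refine le_trans h1 (ENNReal.ofReal_le_ofReal ?_)
      exact mul_le_mul_of_nonneg_left hlm hγ0.le
    calc r k ≤ (ENNReal.ofReal (γ * L k)).toReal :=
          ENNReal.toReal_mono ENNReal.ofReal_ne_top h2
      _ = γ * L k := ENNReal.toReal_ofReal (mul_nonneg hγ0.le (hL0 k))
  -- r 0 ≤ Vbar
  have hrV : r 0 ≤ Vbar := by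
    have : T 0 ≤ ENNReal.ofReal Vbar := hT0 ▸ hx₀
    calc r 0 ≤ (ENNReal.ofReal Vbar).toReal := ENNReal.toReal_mono ENNReal.ofReal_ne_top this
      _ = Vbar := ENNReal.toReal_ofReal hVbar.le
  -- N₀ bound
  have hN₀' : (Vbar - γ * ε) / ε ≤ (N₀ : ℝ) := by
    rw [hN₀]
    exact le_trans (le_max_right _ _) (Nat.le_ceil _)
  -- apply the real decay lemma
  have key := real_tail_decay γ ε Vbar ργ r L N₀ hγ1 hε hVbar hργ hr0 hL0 hrec hloc hrV hN₀'
  intro N hN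
  have hmin : min (γ * ε) Vbar = γlow * ε := by
    rw [hγlow, min_mul_of_nonneg _ _ hε.le, div_mul_cancel₀ _ hε.ne']
  have hrN := key N hN
  rw [hmin] at hrN
  have hργ0 : 0 ≤ ργ := by
    rw [hργ]; exact div_nonneg (by linarith) hγ0.le
  calc Vinf f ℓ Z Uset (traj f x₀ uinf N) = ENNReal.ofReal (r N) := by
        rw [hTeq N, hTofReal N]
    _ ≤ ENNReal.ofReal (ργ ^ (N - N₀) * min (γlow * ε) (r 0)) :=
        ENNReal.ofReal_le_ofReal hrN
    _ = ENNReal.ofReal (ργ ^ (N - N₀)) * ENNReal.ofReal (min (γlow * ε) (r 0)) :=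
        ENNReal.ofReal_mul (by positivity)
    _ = ENNReal.ofReal (ργ ^ (N - N₀)) *
        min (ENNReal.ofReal (γlow * ε)) (ENNReal.ofReal (r 0)) := by
        congr 1
        exact Monotone.map_min (fun a b hab => ENNReal.ofReal_le_ofReal hab)
    _ = _ := by rw [← hTofReal 0, ← hT0]
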